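/- Let ι be a countable type and let E = ι → ℝ carry the product topology and its Borel σ-algebra (which coincides with the product σ-algebra). Let x : Fin m → ι be a finite tuple of points, let L : (Fin m → ℝ) → ℝ be a continuous, bounded, nonnegative function, and define the likelihood ℓ : E → ℝ by ℓ(f) = L(fun i => f (x i)). Let (μ_n) and μ be Borel probability measures on E with μ_n converging weakly to μ, ∫ ℓ dμ > 0, and ∫ ℓ dμ_n > 0 for every n. Then the posteriors ν_n = (∫ ℓ dμ_n)⁻¹ • (μ_n.withDensity ℓ) converge weakly to ν = (∫ ℓ dμ)⁻¹ • (μ.withDensity ℓ). -/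

import Mathlib

open MeasureTheory Filter Topology

lemma aux_integral_posterior {α : Type*} [MeasurableSpace α]
    (μ : Measure α) (ℓ : α → ℝ) (hm : Measurable ℓ) (h0 : ∀ f, 0 ≤ ℓ f)
    (h : α → ℝ) :
    ∫ f, h f ∂((ENNReal.ofReal (∫ f, ℓ f ∂μ))⁻¹ •
      (μ.withDensity fun f => ENNReal.ofReal (ℓ f)))
      = (∫ f, ℓ f ∂μ)⁻¹ * ∫ f, h f * ℓ f ∂μ := by
  have hZ0 : (0:ℝ) ≤ ∫ f, ℓ f ∂μ := integral_nonneg h0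
  rw [integral_smul_measure, ENNReal.toReal_inv, ENNReal.toReal_ofReal hZ0]
  have : ∫ f, h f ∂(μ.withDensity fun f => ENNReal.ofReal (ℓ f))
      = ∫ f, h f * ℓ f ∂μ := by
    simp only [ENNReal.ofReal]
    rw [integral_withDensity_eq_integral_smul (hm.real_toNNReal) h]
    congr 1; ext f
    simp [NNReal.smul_def, Real.coe_toNNReal _ (h0 f), mul_comm]
  rw [this]; rfl

/-- **Proposition 2** in function-space form: the function space `E = ι → ℝ` (product
topology, product σ-algebra), the likelihood depends on `f` only through its values at the
finitely many training inputs `x 0, …, x (m-1)` via a continuous bounded nonnegative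
function `L`.  Weak convergence of the priors implies weak convergence of the posteriors. -/
theorem function_space_posterior_weak_convergence
    {ι : Type*} [Countable ι]
    (m : ℕ) (x : Fin m → ι)
    (L : (Fin m → ℝ) → ℝ) (hLc : Continuous L) (hL0 : ∀ v, 0 ≤ L v)
    (hLb : ∃ B : ℝ, ∀ v, L v ≤ B)
    (ℓ : (ι → ℝ) → ℝ) (hℓ : ∀ f, ℓ f = L (fun i => f (x i)))
    (μ : ℕ → Measure (ι → ℝ)) (μlim : Measure (ι → ℝ))
    [∀ n, IsProbabilityMeasure (μ n)] [IsProbabilityMeasure μlim]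
    (hweak : ∀ h : BoundedContinuousFunction (ι → ℝ) ℝ,
      Tendsto (fun n => ∫ f, h f ∂(μ n)) atTop (𝓝 (∫ f, h f ∂μlim)))
    (hZ : 0 < ∫ f, ℓ f ∂μlim) (hZn : ∀ n, 0 < ∫ f, ℓ f ∂(μ n))
    (ν : ℕ → Measure (ι → ℝ)) (νlim : Measure (ι → ℝ))
    (hν : ∀ n, ν n = (ENNReal.ofReal (∫ f, ℓ f ∂(μ n)))⁻¹ •
      ((μ n).withDensity fun f => ENNReal.ofReal (ℓ f)))
    (hνlim : νlim = (ENNReal.ofReal (∫ f, ℓ f ∂μlim))⁻¹ •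
      (μlim.withDensity fun f => ENNReal.ofReal (ℓ f))) :
    ∀ h : BoundedContinuousFunction (ι → ℝ) ℝ,
      Tendsto (fun n => ∫ f, h f ∂(ν n)) atTop (𝓝 (∫ f, h f ∂νlim)) := by
  intro h
  obtain ⟨B, hB⟩ := hLb
  -- ℓ is continuous
  have hℓc : Continuous ℓ := by
    have : ℓ = fun f => L (fun i => f (x i)) := funext hℓ
    rw [this]
    exact hLc.comp (continuous_pi fun i => continuous_apply (x i))
  have hℓ0 : ∀ f, 0 ≤ ℓ f := fun f => (hℓ f) ▸ hL0 _
  have hℓB : ∀ f, ℓ f ≤ B := fun f => (hℓ f) ▸ hB _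
  have hℓm : Measurable ℓ := hℓc.measurable
  -- ℓ as a bounded continuous function
  set lb : BoundedContinuousFunction (ι → ℝ) ℝ :=
    BoundedContinuousFunction.ofNormedAddCommGroup ℓ hℓc B
      (fun f => by rw [Real.norm_eq_abs, abs_of_nonneg (hℓ0 f)]; exact hℓB f) with hlb
  have hlbf : ∀ f, lb f = ℓ f := fun f => rfl
  -- convergence of normalizing constants
  have hZconv : Tendsto (fun n => ∫ f, ℓ f ∂(μ n)) atTop (𝓝 (∫ f, ℓ f ∂μlim)) := by
    simpa [hlbf] using hweak lb
  -- convergence of numerators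
  have hNconv : Tendsto (fun n => ∫ f, h f * ℓ f ∂(μ n)) atTop
      (𝓝 (∫ f, h f * ℓ f ∂μlim)) := by
    simpa [hlbf] using hweak (h * lb)
  have key : ∀ (κ : Measure (ι → ℝ)), IsProbabilityMeasure κ →
      ∫ f, h f ∂((ENNReal.ofReal (∫ f, ℓ f ∂κ))⁻¹ •
        (κ.withDensity fun f => ENNReal.ofReal (ℓ f)))
        = (∫ f, ℓ f ∂κ)⁻¹ * ∫ f, h f * ℓ f ∂κ :=
    fun κ _ => aux_integral_posterior κ ℓ hℓm hℓ0 h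
  have e1 : ∀ n, ∫ f, h f ∂(ν n) = (∫ f, ℓ f ∂(μ n))⁻¹ * ∫ f, h f * ℓ f ∂(μ n) := by
    intro n; rw [hν n]; exact key (μ n) inferInstance
  have e2 : ∫ f, h f ∂νlim = (∫ f, ℓ f ∂μlim)⁻¹ * ∫ f, h f * ℓ f ∂μlim := by
    rw [hνlim]; exact key μlim inferInstance
  simp only [e1, e2]
  exact (hZconv.inv₀ (ne_of_gt hZ)).mul hNconv
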